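/- arXiv:2003.02331 — 2 statements merged into one kernel-verified Lean document; each statement's English description precedes it below -/
import Mathlib

section
/- Let (μ_n) be a sequence of finite (signed) Borel measures on a metric space E converging narrowly to a finite signed measure μ (i.e., ∫η dμ_n → ∫η dμ for every bounded continuous η), and suppose additionally that |μ_n|(E) → |μ|(E). Then |μ_n| → |μ| narrowly. -/
open MeasureTheory Filter Topology

/-- Integral of a function against a finite signed measure, via the Jordan decomposition. -/
noncomputable def sint {E : Type*} [MeasurableSpace E] (ν : SignedMeasure E) (η : E → ℝ) : ℝ :=
  (∫ x, η x ∂ν.toJordanDecomposition.posPart) - ∫ x, η x ∂ν.toJordanDecomposition.negPart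

open scoped BoundedContinuousFunction

instance {E : Type*} [MeasurableSpace E] (ν : SignedMeasure E) :
    IsFiniteMeasure ν.totalVariation := by
  unfold SignedMeasure.totalVariation; infer_instance

lemma clamp_abs_sub_le {a b c : ℝ} (hb : |b| ≤ c) : |max (min a c) (-c) - b| ≤ |a - b| := by
  rcases abs_le.1 hb with ⟨h1, h2⟩
  have hab1 := le_abs_self (a - b)
  have hab2 := neg_abs_le (a - b)
  rcases le_total a c with hac | hac
  · rw [min_eq_left hac]
    rcases le_total (-c) a with h | h
    · rw [max_eq_left h]
    · rw [max_eq_right h]; rw [abs_le]; constructor <;> linarith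
  · rw [min_eq_right hac]
    have : -c ≤ c := by linarith
    rw [max_eq_left this, abs_le]; constructor <;> linarith

lemma tv_integral_split {E : Type*} [MeasurableSpace E] [TopologicalSpace E] [OpensMeasurableSpace E]
    (ν : SignedMeasure E) (η : E →ᵇ ℝ) :
    ∫ x, η x ∂ν.totalVariation =
      (∫ x, η x ∂ν.toJordanDecomposition.posPart) + ∫ x, η x ∂ν.toJordanDecomposition.negPart := by
  rw [SignedMeasure.totalVariation, integral_add_measure (η.integrable _) (η.integrable _)]

lemma sint_abs_le {E : Type*} [MeasurableSpace E] [TopologicalSpace E] [OpensMeasurableSpace E]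
    (ν : SignedMeasure E) (η : E →ᵇ ℝ) :
    |sint ν η| ≤ ∫ x, |η x| ∂ν.totalVariation := by
  rw [show (fun x => |η x|) = fun x => (|η| : E →ᵇ ℝ) x from funext fun x => rfl]
  rw [tv_integral_split]
  have h1 : |∫ x, η x ∂ν.toJordanDecomposition.posPart| ≤ ∫ x, (|η| : E →ᵇ ℝ) x ∂ν.toJordanDecomposition.posPart := by
    simpa using norm_integral_le_integral_norm (μ := ν.toJordanDecomposition.posPart) (fun x => η x)
  have h2 : |∫ x, η x ∂ν.toJordanDecomposition.negPart| ≤ ∫ x, (|η| : E →ᵇ ℝ) x ∂ν.toJordanDecomposition.negPart := by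
    simpa using norm_integral_le_integral_norm (μ := ν.toJordanDecomposition.negPart) (fun x => η x)
  calc |sint ν η| ≤ |∫ x, η x ∂ν.toJordanDecomposition.posPart| + |∫ x, η x ∂ν.toJordanDecomposition.negPart| :=
        abs_sub _ _
    _ ≤ _ := add_le_add h1 h2

lemma key_liminf {E : Type*} [MetricSpace E] [MeasurableSpace E] [BorelSpace E]
    (μn : ℕ → SignedMeasure E) (μ : SignedMeasure E)
    (hnarrow : ∀ η : E →ᵇ ℝ, Tendsto (fun n => sint (μn n) η) atTop (𝓝 (sint μ η)))
    (η : E →ᵇ ℝ) (hη : ∀ x, 0 ≤ η x) {ε : ℝ} (hε : 0 < ε) :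
    ∀ᶠ n in atTop, ∫ x, η x ∂μ.totalVariation - ε ≤ ∫ x, η x ∂(μn n).totalVariation := by
  classical
  obtain ⟨S, hSm, hpS, hqS⟩ := μ.toJordanDecomposition.mutuallySingular
  set p := μ.toJordanDecomposition.posPart with hp
  set q := μ.toJordanDecomposition.negPart with hq
  set h : E → ℝ := fun x => if x ∈ S then -1 else 1 with hh
  have hmeas : Measurable h := Measurable.ite hSm measurable_const measurable_const
  have habs : ∀ x, |h x| = 1 := fun x => by by_cases hx : x ∈ S <;> simp [hh, hx]
  have hsq : ∀ x, h x * h x = 1 := fun x => by by_cases hx : x ∈ S <;> simp [hh, hx]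
  have hp1 : ∀ᵐ x ∂p, h x = 1 := by
    rw [ae_iff]
    refine measure_mono_null (fun x hx => ?_) hpS
    by_contra hxS; exact hx (by simp [hh, hxS])
  have hq1 : ∀ᵐ x ∂q, h x = -1 := by
    rw [ae_iff]
    refine measure_mono_null (fun x hx => ?_) hqS
    by_contra hxS
    have hxS' : x ∈ S := not_not.1 hxS
    exact hx (by simp [hh, hxS'])
  -- sint formula
  have hsint : ∀ ψ : E →ᵇ ℝ, sint μ ψ = ∫ x, ψ x * h x ∂μ.totalVariation := by
    intro ψ
    have hi : Integrable (fun x => ψ x * h x) (p + q) := by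
      refine Integrable.mono' (integrable_const ‖ψ‖)
        ((ψ.continuous.measurable.mul hmeas).aestronglyMeasurable) ?_
      filter_upwards with x
      rw [Real.norm_eq_abs, abs_mul, habs x, mul_one]
      exact ψ.norm_coe_le_norm x
    have e1 : ∫ x, ψ x * h x ∂p = ∫ x, ψ x ∂p := by
      refine integral_congr_ae ?_
      filter_upwards [hp1] with x hx; rw [hx, mul_one]
    have e2 : ∫ x, ψ x * h x ∂q = -∫ x, ψ x ∂q := by
      rw [← integral_neg]
      refine integral_congr_ae ?_
      filter_upwards [hq1] with x hx; rw [hx, mul_neg_one]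
    rw [show μ.totalVariation = p + q from rfl,
      integral_add_measure (hi.mono_measure (Measure.le_add_right le_rfl))
        (hi.mono_measure (Measure.le_add_left le_rfl)), e1, e2]
    rfl
  -- the function to approximate
  set f : E → ℝ := fun x => η x * h x with hf
  have hfint : Integrable f μ.totalVariation := by
    refine Integrable.mono' (integrable_const ‖η‖)
      ((η.continuous.measurable.mul hmeas).aestronglyMeasurable) ?_
    filter_upwards with x
    rw [Real.norm_eq_abs, abs_mul, habs x, mul_one]
    exact η.norm_coe_le_norm x
  obtain ⟨ψ, hψ, -⟩ := hfint.exists_boundedContinuous_integral_sub_le (half_pos hε)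
  set ψ' : E →ᵇ ℝ := (ψ ⊓ η) ⊔ (-η) with hψ'
  have hψ'x : ∀ x, ψ' x = max (min (ψ x) (η x)) (-(η x)) := fun x => rfl
  have hfle : ∀ x, |f x| ≤ η x := fun x => by
    rw [hf, abs_mul, habs x, mul_one, abs_of_nonneg (hη x)]
  have hψ'le : ∀ x, |ψ' x| ≤ η x := by
    intro x
    rw [hψ'x, abs_le]
    refine ⟨le_max_right _ _, max_le (min_le_right _ _) (by linarith [hη x])⟩
  have hclose : ∀ x, |ψ' x - f x| ≤ ‖f x - ψ x‖ := by
    intro x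
    rw [hψ'x, Real.norm_eq_abs, abs_sub_comm (f x) (ψ x)]
    exact clamp_abs_sub_le (hfle x)
  have hfh : ∀ x, f x * h x = η x := fun x => by rw [hf, mul_assoc, hsq x, mul_one]
  have hψ'int : Integrable (fun x => ψ' x * h x) μ.totalVariation := by
    refine Integrable.mono' (integrable_const ‖ψ'‖)
      ((ψ'.continuous.measurable.mul hmeas).aestronglyMeasurable) ?_
    filter_upwards with x
    rw [Real.norm_eq_abs, abs_mul, habs x, mul_one]
    exact ψ'.norm_coe_le_norm x
  have hfhint : Integrable (fun x => f x * h x) μ.totalVariation := by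
    rw [show (fun x => f x * h x) = fun x => η x from funext hfh]
    exact η.integrable _
  have hest1 : ∫ x, η x ∂μ.totalVariation - ε / 2 ≤ sint μ ψ' := by
    rw [hsint ψ']
    have : |∫ x, ψ' x * h x ∂μ.totalVariation - ∫ x, f x * h x ∂μ.totalVariation| ≤ ε / 2 := by
      rw [← integral_sub hψ'int hfhint, ← Real.norm_eq_abs]
      refine (norm_integral_le_integral_norm _).trans ?_
      refine (integral_mono (hψ'int.sub hfhint).norm (hfint.sub (ψ.integrable _)).norm ?_).trans hψ
      intro x
      simp only [Pi.sub_apply, Real.norm_eq_abs, ← sub_mul, abs_mul, habs x, mul_one]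
      exact (hclose x).trans_eq (Real.norm_eq_abs _)
    have heq : ∫ x, f x * h x ∂μ.totalVariation = ∫ x, η x ∂μ.totalVariation :=
      integral_congr_ae (Eventually.of_forall fun x => hfh x)
    rw [heq] at this
    linarith [abs_le.1 this |>.1]
  have hest2 : ∀ n, sint (μn n) ψ' ≤ ∫ x, η x ∂(μn n).totalVariation := by
    intro n
    refine (le_abs_self _).trans ((sint_abs_le _ _).trans ?_)
    refine integral_mono ?_ (η.integrable _) fun x => hψ'le x
    have : Integrable (fun x => (|ψ'| : E →ᵇ ℝ) x) ((μn n).totalVariation) := (|ψ'|).integrable _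
    simpa using this
  have := (hnarrow ψ').eventually (eventually_ge_nhds (show sint μ ψ' - ε / 2 < sint μ ψ' by linarith))
  filter_upwards [this] with n hn
  have := hest2 n
  linarith [hest1]

theorem stmt3 {E : Type*} [MetricSpace E] [MeasurableSpace E] [BorelSpace E]
    (μn : ℕ → SignedMeasure E) (μ : SignedMeasure E)
    (hnarrow : ∀ η : BoundedContinuousFunction E ℝ,
      Tendsto (fun n => sint (μn n) η) atTop (𝓝 (sint μ η)))
    (htv : Tendsto (fun n => ((μn n).totalVariation Set.univ).toReal) atTop
      (𝓝 ((μ.totalVariation Set.univ).toReal))) :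
    ∀ η : BoundedContinuousFunction E ℝ,
      Tendsto (fun n => ∫ x, η x ∂(μn n).totalVariation) atTop
        (𝓝 (∫ x, η x ∂μ.totalVariation)) := by
  intro η
  rw [Metric.tendsto_nhds]
  intro ε hε
  set c := ‖η‖ with hc
  have hc0 : (0:ℝ) ≤ c := norm_nonneg η
  set δ := ε / (4 * (c + 1)) with hδ
  have hδ0 : 0 < δ := by positivity
  have hδ4 : δ * (c + 1) = ε / 4 := by rw [hδ]; field_simp
  have hb : ∀ x, |η x| ≤ c := fun x => (Real.norm_eq_abs (η x)) ▸ η.norm_coe_le_norm x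
  have hpos1 : ∀ x, 0 ≤ (η + BoundedContinuousFunction.const E c) x := by
    intro x
    simp only [BoundedContinuousFunction.coe_add, Pi.add_apply,
      BoundedContinuousFunction.const_apply]
    linarith [abs_le.1 (hb x) |>.1]
  have hpos2 : ∀ x, 0 ≤ (BoundedContinuousFunction.const E c - η) x := by
    intro x
    simp only [BoundedContinuousFunction.coe_sub, Pi.sub_apply,
      BoundedContinuousFunction.const_apply]
    linarith [abs_le.1 (hb x) |>.2]
  have expand1 : ∀ ν : SignedMeasure E,
      ∫ x, (η + BoundedContinuousFunction.const E c) x ∂ν.totalVariation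
        = ∫ x, η x ∂ν.totalVariation + (ν.totalVariation Set.univ).toReal * c := by
    intro ν
    simp only [BoundedContinuousFunction.coe_add, Pi.add_apply,
      BoundedContinuousFunction.const_apply]
    rw [integral_add (η.integrable _) (integrable_const c), integral_const, smul_eq_mul]
    rfl
  have expand2 : ∀ ν : SignedMeasure E,
      ∫ x, (BoundedContinuousFunction.const E c - η) x ∂ν.totalVariation
        = (ν.totalVariation Set.univ).toReal * c - ∫ x, η x ∂ν.totalVariation := by
    intro ν
    simp only [BoundedContinuousFunction.coe_sub, Pi.sub_apply,
      BoundedContinuousFunction.const_apply]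
    rw [integral_sub (integrable_const c) (η.integrable _), integral_const, smul_eq_mul]
    rfl
  have key1 := key_liminf μn μ hnarrow (η + BoundedContinuousFunction.const E c) hpos1
    (show (0:ℝ) < ε / 4 by linarith)
  have key2 := key_liminf μn μ hnarrow (BoundedContinuousFunction.const E c - η) hpos2
    (show (0:ℝ) < ε / 4 by linarith)
  have hmass := Metric.tendsto_nhds.1 htv δ hδ0
  filter_upwards [key1, key2, hmass] with n hk1 hk2 hd
  rw [expand1, expand1] at hk1
  rw [expand2, expand2] at hk2
  rw [Real.dist_eq] at hd ⊢
  set In := ∫ x, η x ∂(μn n).totalVariation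
  set I := ∫ x, η x ∂μ.totalVariation
  set mn := ((μn n).totalVariation Set.univ).toReal
  set m := (μ.totalVariation Set.univ).toReal
  have habs := abs_lt.1 hd
  have h5 : |mn - m| * c ≤ δ * c := mul_le_mul_of_nonneg_right hd.le hc0
  have h6 : (mn - m) * c ≤ |mn - m| * c := mul_le_mul_of_nonneg_right (le_abs_self _) hc0
  have h7 : -|mn - m| * c ≤ (mn - m) * c := mul_le_mul_of_nonneg_right (neg_abs_le _) hc0
  have h8 : δ * c ≤ δ * (c + 1) := by nlinarith
  rw [abs_lt]
  constructor <;> nlinarith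
end

section
/- Let E be a locally compact separable metric space and (ν_k), μ be finite signed Borel measures on E. Suppose ν_k = σ_k + ρ_k − τ_k where ‖σ_k‖_TV → 0, ρ_k → μ⁺ narrowly, and τ_k → μ⁻ narrowly, with ρ_k, τ_k positive finite measures. Then ν_k → μ narrowly and limsup_k |ν_k|(E) ≤ |μ|(E); if moreover μ⁺ ⊥ μ⁻, then |ν_k|(E) → |μ|(E). -/
open MeasureTheory Filter Topology

section Aux

variable {E : Type*} [MeasurableSpace E]

lemma jordan_add_eq (ν : SignedMeasure E) (a b : Measure E) [IsFiniteMeasure a]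
    [IsFiniteMeasure b] (h : ν = a.toSignedMeasure - b.toSignedMeasure) :
    ν.toJordanDecomposition.posPart + b = ν.toJordanDecomposition.negPart + a := by
  have h1 : ν.toJordanDecomposition.posPart.toSignedMeasure -
      ν.toJordanDecomposition.negPart.toSignedMeasure = a.toSignedMeasure - b.toSignedMeasure := by
    rw [← h]
    exact ν.toSignedMeasure_toJordanDecomposition
  rw [← Measure.toSignedMeasure_eq_toSignedMeasure_iff, Measure.toSignedMeasure_add,
    Measure.toSignedMeasure_add]
  have : ν.toJordanDecomposition.posPart.toSignedMeasure + b.toSignedMeasure =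
      ν.toJordanDecomposition.negPart.toSignedMeasure + a.toSignedMeasure := by
    have := sub_eq_sub_iff_add_eq_add.mp h1
    linear_combination (norm := abel_nf) this
  exact this

lemma tv_toReal (ν : SignedMeasure E) :
    (ν.totalVariation Set.univ).toReal = (ν.toJordanDecomposition.posPart Set.univ).toReal +
      (ν.toJordanDecomposition.negPart Set.univ).toReal := by
  rw [SignedMeasure.totalVariation, Measure.add_apply,
    ENNReal.toReal_add (measure_ne_top _ _) (measure_ne_top _ _)]

lemma tv_le (ν : SignedMeasure E) (a b : Measure E) [IsFiniteMeasure a]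
    [IsFiniteMeasure b] (h : ν = a.toSignedMeasure - b.toSignedMeasure) :
    (ν.totalVariation Set.univ).toReal ≤ (a Set.univ).toReal + (b Set.univ).toReal := by
  have key := jordan_add_eq ν a b h
  obtain ⟨S, hSm, hS1, hS2⟩ := ν.toJordanDecomposition.mutuallySingular
  set p := ν.toJordanDecomposition.posPart
  set q := ν.toJordanDecomposition.negPart
  have hp : p Set.univ ≤ a Set.univ := by
    calc p Set.univ = p (S ∪ Sᶜ) := by rw [Set.union_compl_self]
    _ ≤ p S + p Sᶜ := measure_union_le _ _
    _ = p Sᶜ := by rw [hS1, zero_add]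
    _ ≤ (p + b) Sᶜ := by rw [Measure.add_apply]; exact le_self_add
    _ = (q + a) Sᶜ := by rw [key]
    _ = q Sᶜ + a Sᶜ := by simp [Measure.add_apply]
    _ = a Sᶜ := by rw [hS2, zero_add]
    _ ≤ a Set.univ := measure_mono (Set.subset_univ _)
  have hq : q Set.univ ≤ b Set.univ := by
    calc q Set.univ = q (S ∪ Sᶜ) := by rw [Set.union_compl_self]
    _ ≤ q S + q Sᶜ := measure_union_le _ _
    _ = q S := by rw [hS2, add_zero]
    _ ≤ (q + a) S := by rw [Measure.add_apply]; exact le_self_add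
    _ = (p + b) S := by rw [key]
    _ = p S + b S := by simp [Measure.add_apply]
    _ = b S := by rw [hS1, zero_add]
    _ ≤ b Set.univ := measure_mono (Set.subset_univ _)
  rw [tv_toReal]
  have h1 : (p Set.univ).toReal ≤ (a Set.univ).toReal :=
    ENNReal.toReal_le_toReal (measure_ne_top _ _) (measure_ne_top _ _) |>.mpr hp
  have h2 : (q Set.univ).toReal ≤ (b Set.univ).toReal :=
    ENNReal.toReal_le_toReal (measure_ne_top _ _) (measure_ne_top _ _) |>.mpr hq
  linarith

end Aux

section Aux2

variable {E : Type*} [MetricSpace E] [MeasurableSpace E] [BorelSpace E]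

lemma sint_eq (ν : SignedMeasure E) (a b : Measure E) [IsFiniteMeasure a]
    [IsFiniteMeasure b] (h : ν = a.toSignedMeasure - b.toSignedMeasure)
    (η : BoundedContinuousFunction E ℝ) :
    sint ν η = (∫ x, η x ∂a) - ∫ x, η x ∂b := by
  have key := jordan_add_eq ν a b h
  have h1 : (∫ x, η x ∂(ν.toJordanDecomposition.posPart + b)) =
      ∫ x, η x ∂(ν.toJordanDecomposition.negPart + a) := by rw [key]
  rw [integral_add_measure (η.integrable _) (η.integrable _),
    integral_add_measure (η.integrable _) (η.integrable _)] at h1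
  unfold sint
  linarith

lemma sint_abs_le_s14 (ν : SignedMeasure E) (η : BoundedContinuousFunction E ℝ) :
    |sint ν η| ≤ ‖η‖ * (ν.totalVariation Set.univ).toReal := by
  have h1 : ‖∫ x, η x ∂ν.toJordanDecomposition.posPart‖ ≤
      ‖η‖ * (ν.toJordanDecomposition.posPart Set.univ).toReal :=
    norm_integral_le_of_norm_le_const (Eventually.of_forall fun x => η.norm_coe_le_norm x)
  have h2 : ‖∫ x, η x ∂ν.toJordanDecomposition.negPart‖ ≤
      ‖η‖ * (ν.toJordanDecomposition.negPart Set.univ).toReal :=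
    norm_integral_le_of_norm_le_const (Eventually.of_forall fun x => η.norm_coe_le_norm x)
  rw [tv_toReal]
  unfold sint
  rw [Real.norm_eq_abs] at h1 h2
  have := abs_sub (∫ x, η x ∂ν.toJordanDecomposition.posPart)
    (∫ x, η x ∂ν.toJordanDecomposition.negPart)
  calc |(∫ x, η x ∂ν.toJordanDecomposition.posPart) -
      ∫ x, η x ∂ν.toJordanDecomposition.negPart| ≤
      |∫ x, η x ∂ν.toJordanDecomposition.posPart| +
      |∫ x, η x ∂ν.toJordanDecomposition.negPart| := abs_sub _ _
  _ ≤ ‖η‖ * (ν.toJordanDecomposition.posPart Set.univ).toReal +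
      ‖η‖ * (ν.toJordanDecomposition.negPart Set.univ).toReal := add_le_add h1 h2
  _ = ‖η‖ * ((ν.toJordanDecomposition.posPart Set.univ).toReal +
      (ν.toJordanDecomposition.negPart Set.univ).toReal) := by ring

lemma est (m : Measure E) [IsFiniteMeasure m] {s : Set E} (hs : MeasurableSet s)
    (η : BoundedContinuousFunction E ℝ) (h1 : ∀ x ∈ s, η x = 1) (hb : ∀ x, -1 ≤ η x) :
    (m Set.univ).toReal - 2 * (m sᶜ).toReal ≤ ∫ x, η x ∂m := by
  have hint := η.integrable m
  have hsplit : (∫ x in s, η x ∂m) + ∫ x in sᶜ, η x ∂m = ∫ x, η x ∂m :=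
    integral_add_compl hs hint
  have hA : (∫ x in s, η x ∂m) = (m s).toReal := by
    rw [setIntegral_congr_fun hs h1]
    simp [setIntegral_const, measureReal_def]
  have hB : -(m sᶜ).toReal ≤ ∫ x in sᶜ, η x ∂m := by
    have : (∫ x in sᶜ, (-1 : ℝ) ∂m) ≤ ∫ x in sᶜ, η x ∂m :=
      setIntegral_mono_on (integrable_const _).integrableOn hint.integrableOn hs.compl
        fun x _ => hb x
    simpa [setIntegral_const, measureReal_def] using this
  have hcompl : (m sᶜ).toReal = (m Set.univ).toReal - (m s).toReal := by
    rw [measure_compl hs (measure_ne_top m s),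
      ENNReal.toReal_sub_of_le (measure_mono (Set.subset_univ _)) (measure_ne_top _ _)]
  linarith

end Aux2

set_option maxHeartbeats 1000000 in
theorem stmt14 {E : Type*} [MetricSpace E] [TopologicalSpace.SeparableSpace E]
    [LocallyCompactSpace E] [MeasurableSpace E] [BorelSpace E]
    (ν σ : ℕ → SignedMeasure E) (μ : SignedMeasure E)
    (ρ τ : ℕ → Measure E) (hρf : ∀ k, IsFiniteMeasure (ρ k)) (hτf : ∀ k, IsFiniteMeasure (τ k))
    (hdecomp : ∀ k, ν k = σ k + @Measure.toSignedMeasure E _ (ρ k) (hρf k)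
      - @Measure.toSignedMeasure E _ (τ k) (hτf k))
    (hσ : Tendsto (fun k => ((σ k).totalVariation Set.univ).toReal) atTop (𝓝 0))
    (hρ : ∀ η : BoundedContinuousFunction E ℝ,
      Tendsto (fun k => ∫ x, η x ∂ρ k) atTop
        (𝓝 (∫ x, η x ∂μ.toJordanDecomposition.posPart)))
    (hτ : ∀ η : BoundedContinuousFunction E ℝ,
      Tendsto (fun k => ∫ x, η x ∂τ k) atTop
        (𝓝 (∫ x, η x ∂μ.toJordanDecomposition.negPart))) :
    (∀ η : BoundedContinuousFunction E ℝ,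
      Tendsto (fun k => sint (ν k) η) atTop (𝓝 (sint μ η))) ∧
    Filter.limsup (fun k => ((ν k).totalVariation Set.univ).toReal) atTop
      ≤ (μ.totalVariation Set.univ).toReal ∧
    (MeasureTheory.Measure.MutuallySingular μ.toJordanDecomposition.posPart
        μ.toJordanDecomposition.negPart →
      Tendsto (fun k => ((ν k).totalVariation Set.univ).toReal) atTop
        (𝓝 ((μ.totalVariation Set.univ).toReal))) := by
  haveI := hρf; haveI := hτf
  -- the decompositions
  set a : ℕ → Measure E := fun k => (σ k).toJordanDecomposition.posPart + ρ k with ha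
  set b : ℕ → Measure E := fun k => (σ k).toJordanDecomposition.negPart + τ k with hb
  haveI hafin : ∀ k, IsFiniteMeasure (a k) := fun k => by simp only [ha]; infer_instance
  haveI hbfin : ∀ k, IsFiniteMeasure (b k) := fun k => by simp only [hb]; infer_instance
  have hab : ∀ k, ν k = (a k).toSignedMeasure - (b k).toSignedMeasure := by
    intro k
    apply VectorMeasure.ext
    intro i hi
    have hσk : σ k i = ((σ k).toJordanDecomposition.posPart i).toReal -
        ((σ k).toJordanDecomposition.negPart i).toReal := by
      conv_lhs => rw [← (σ k).toSignedMeasure_toJordanDecomposition]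
      rw [JordanDecomposition.toSignedMeasure, VectorMeasure.sub_apply,
        Measure.toSignedMeasure_apply_measurable hi,
        Measure.toSignedMeasure_apply_measurable hi]
      rfl
    rw [hdecomp k]
    rw [VectorMeasure.sub_apply, VectorMeasure.sub_apply, VectorMeasure.add_apply,
      Measure.toSignedMeasure_apply_measurable hi, Measure.toSignedMeasure_apply_measurable hi,
      Measure.toSignedMeasure_apply_measurable hi, Measure.toSignedMeasure_apply_measurable hi]
    simp only [ha, hb, Measure.add_apply, measureReal_def]
    rw [ENNReal.toReal_add (measure_ne_top _ _) (measure_ne_top _ _),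
      ENNReal.toReal_add (measure_ne_top _ _) (measure_ne_top _ _)]
    linarith
  -- Part 1
  have part1 : ∀ η : BoundedContinuousFunction E ℝ,
      Tendsto (fun k => sint (ν k) η) atTop (𝓝 (sint μ η)) := by
    intro η
    have hrepr : ∀ k, sint (ν k) η =
        sint (σ k) η + ((∫ x, η x ∂ρ k) - ∫ x, η x ∂τ k) := by
      intro k
      rw [sint_eq (ν k) (a k) (b k) (hab k) η]
      simp only [ha, hb]
      rw [integral_add_measure (η.integrable _) (η.integrable _),
        integral_add_measure (η.integrable _) (η.integrable _)]
      unfold sint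
      ring
    have hσ0 : Tendsto (fun k => sint (σ k) η) atTop (𝓝 0) := by
      apply squeeze_zero_norm (fun k => (sint_abs_le_s14 (σ k) η).trans_eq rfl)
      have := hσ.const_mul ‖η‖
      simpa using this
    have := (hσ0.add ((hρ η).sub (hτ η)))
    rw [zero_add] at this
    have heq : sint μ η = (∫ x, η x ∂μ.toJordanDecomposition.posPart) -
        ∫ x, η x ∂μ.toJordanDecomposition.negPart := rfl
    rw [heq]
    exact this.congr fun k => (hrepr k).symm
  -- common ingredients for parts 2 and 3
  have hone : ∀ (m : Measure E) [IsFiniteMeasure m],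
      (∫ x, (BoundedContinuousFunction.const E (1 : ℝ)) x ∂m) = (m Set.univ).toReal := by
    intro m _
    simp [measureReal_def]
  have hρmass : Tendsto (fun k => ((ρ k) Set.univ).toReal) atTop
      (𝓝 ((μ.toJordanDecomposition.posPart Set.univ).toReal)) := by
    have := hρ (BoundedContinuousFunction.const E (1 : ℝ))
    simpa [hone, measureReal_def] using this
  have hτmass : Tendsto (fun k => ((τ k) Set.univ).toReal) atTop
      (𝓝 ((μ.toJordanDecomposition.negPart Set.univ).toReal)) := by
    have := hτ (BoundedContinuousFunction.const E (1 : ℝ))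
    simpa [hone, measureReal_def] using this
  set L := (μ.totalVariation Set.univ).toReal with hL
  set B : ℕ → ℝ := fun k => ((σ k).totalVariation Set.univ).toReal +
    (((ρ k) Set.univ).toReal + ((τ k) Set.univ).toReal) with hBdef
  have hBtend : Tendsto B atTop (𝓝 L) := by
    have := hσ.add (hρmass.add hτmass)
    rw [zero_add] at this
    rw [hL, tv_toReal]
    exact this
  set g : ℕ → ℝ := fun k => ((ν k).totalVariation Set.univ).toReal with hgdef
  have hgB : ∀ k, g k ≤ B k := by
    intro k
    have := tv_le (ν k) (a k) (b k) (hab k)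
    simp only [ha, hb] at this
    simp only [Measure.add_apply] at this
    rw [ENNReal.toReal_add (measure_ne_top _ _) (measure_ne_top _ _),
      ENNReal.toReal_add (measure_ne_top _ _) (measure_ne_top _ _)] at this
    have htv := tv_toReal (σ k)
    rw [hgdef, hBdef]
    dsimp only
    linarith
  have hg0 : ∀ k, 0 ≤ g k := fun k => ENNReal.toReal_nonneg
  have hgBddAbove : IsBoundedUnder (· ≤ ·) atTop g := by
    obtain ⟨c, hc⟩ := hBtend.isBoundedUnder_le
    rw [Filter.eventually_map] at hc
    exact ⟨c, Filter.eventually_map.2 (hc.mono fun k hk => (hgB k).trans hk)⟩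
  have hgBddBelow : IsBoundedUnder (· ≥ ·) atTop g :=
    ⟨0, Filter.eventually_map.2 (Eventually.of_forall hg0)⟩
  have part2 : limsup g atTop ≤ L := by
    have h1 : limsup g atTop ≤ limsup B atTop :=
      limsup_le_limsup (Eventually.of_forall hgB)
        (isCoboundedUnder_le_of_eventually_le atTop (Eventually.of_forall hg0))
        hBtend.isBoundedUnder_le
    rw [hBtend.limsup_eq] at h1
    exact h1
  -- Part 3
  have part3 : MeasureTheory.Measure.MutuallySingular μ.toJordanDecomposition.posPart
      μ.toJordanDecomposition.negPart →
      Tendsto g atTop (𝓝 L) := by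
    intro hsing
    apply tendsto_of_le_liminf_of_limsup_le _ part2 hgBddAbove hgBddBelow
    -- suffices to show L ≤ liminf g
    apply le_of_forall_pos_le_add
    intro ε hε
    obtain ⟨A, hAm, hA1, hA2⟩ := hsing
    have hpPc : μ.toJordanDecomposition.posPart Aᶜᶜ = 0 := by rw [compl_compl]; exact hA1
    have hqP : μ.toJordanDecomposition.negPart Aᶜ = 0 := hA2
    have hδpos : 0 < ε / 4 := by positivity
    have hδE : (0 : ENNReal) < ENNReal.ofReal (ε / 4) := ENNReal.ofReal_pos.mpr hδpos
    -- outer regularity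
    obtain ⟨U, hPU, hUo, hU⟩ := Set.exists_isOpen_lt_of_lt
      (μ := μ.toJordanDecomposition.negPart) Aᶜ (ENNReal.ofReal (ε / 4))
      (by rw [hqP]; exact hδE)
    obtain ⟨V, hPV, hVo, hV⟩ := Set.exists_isOpen_lt_of_lt
      (μ := μ.toJordanDecomposition.posPart) Aᶜᶜ (ENNReal.ofReal (ε / 4))
      (by rw [hpPc]; exact hδE)
    have hFc : IsClosed Vᶜ := hVo.isClosed_compl
    have hFU : Vᶜ ⊆ U := by
      intro x hx
      apply hPU
      by_contra hxP
      exact hx (hPV (by simpa using hxP))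
    have hUc : IsClosed Uᶜ := hUo.isClosed_compl
    have hdisj : Disjoint Uᶜ Vᶜ := Set.disjoint_compl_left_iff_subset.mpr hFU
    obtain ⟨f, hf0, hf1, hf01⟩ := exists_continuous_zero_one_of_isClosed hUc hFc hdisj
    -- the test function
    set η : BoundedContinuousFunction E ℝ :=
      BoundedContinuousFunction.ofNormedAddCommGroup (fun x => 2 * f x - 1)
        (by continuity) 1 (fun x => by
          have h := hf01 x
          rw [Real.norm_eq_abs, abs_le]
          constructor
          · show -1 ≤ 2 * f x - 1
            linarith [h.1]
          · show 2 * f x - 1 ≤ 1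
            linarith [h.2]) with hηdef
    have hηx : ∀ x, η x = 2 * f x - 1 := by
      intro x
      rw [hηdef]
      simp [BoundedContinuousFunction.coe_ofNormedAddCommGroup]
    have hηnorm : ‖η‖ ≤ 1 :=
      BoundedContinuousFunction.norm_ofNormedAddCommGroup_le _ zero_le_one _
    have hηF : ∀ x ∈ Vᶜ, η x = 1 := by
      intro x hx
      rw [hηx x, hf1 hx]
      norm_num
    have hηU : ∀ x ∈ Uᶜ, (-η) x = 1 := by
      intro x hx
      have : η x = -1 := by
        rw [hηx x, hf0 hx]
        norm_num
      simp [this]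
    have hηlb : ∀ x, -1 ≤ η x := by
      intro x
      rw [hηx x]
      linarith [(hf01 x).1]
    have hηub : ∀ x, -1 ≤ (-η) x := by
      intro x
      have : η x ≤ 1 := by
        rw [hηx x]
        linarith [(hf01 x).2]
      simpa using this
    -- estimate sint μ η from below
    have hVtoReal : (μ.toJordanDecomposition.posPart V).toReal < ε / 4 :=
      ENNReal.toReal_lt_of_lt_ofReal hV
    have hUtoReal : (μ.toJordanDecomposition.negPart U).toReal < ε / 4 :=
      ENNReal.toReal_lt_of_lt_ofReal hU
    have hest1 : (μ.toJordanDecomposition.posPart Set.univ).toReal -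
        2 * (μ.toJordanDecomposition.posPart Vᶜᶜ).toReal ≤
        ∫ x, η x ∂μ.toJordanDecomposition.posPart :=
      est μ.toJordanDecomposition.posPart hFc.measurableSet η hηF hηlb
    rw [compl_compl] at hest1
    have hest2 : (μ.toJordanDecomposition.negPart Set.univ).toReal -
        2 * (μ.toJordanDecomposition.negPart Uᶜᶜ).toReal ≤
        ∫ x, (-η) x ∂μ.toJordanDecomposition.negPart :=
      est μ.toJordanDecomposition.negPart hUc.measurableSet (-η) hηU hηub
    rw [compl_compl] at hest2
    have hintq : (∫ x, (-η) x ∂μ.toJordanDecomposition.negPart) =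
        -∫ x, η x ∂μ.toJordanDecomposition.negPart := by
      simp only [BoundedContinuousFunction.coe_neg, Pi.neg_apply]
      exact integral_neg _
    have hsintμ : L - ε ≤ sint μ η := by
      have heq : sint μ η = (∫ x, η x ∂μ.toJordanDecomposition.posPart) -
          ∫ x, η x ∂μ.toJordanDecomposition.negPart := rfl
      rw [heq, hL, tv_toReal]
      rw [hintq] at hest2
      linarith
    -- each sint νk η ≤ g k
    have hkey : ∀ k, sint (ν k) η ≤ g k := by
      intro k
      have h1 : sint (ν k) η ≤ |sint (ν k) η| := le_abs_self _
      have h2 := sint_abs_le_s14 (ν k) η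
      have h3 : ‖η‖ * ((ν k).totalVariation Set.univ).toReal ≤ g k := by
        rw [hgdef]
        dsimp only
        nlinarith [hg0 k, norm_nonneg η]
      linarith
    -- conclude via liminf
    have hlim := part1 η
    have h5 : sint μ η ≤ liminf g atTop := by
      have := liminf_le_liminf (Eventually.of_forall hkey)
        hlim.isBoundedUnder_ge hgBddAbove.isCoboundedUnder_ge
      rwa [hlim.liminf_eq] at this
    linarith
  exact ⟨part1, part2, part3⟩
end
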